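/- In a perfect system, the optimal efficiency of any subset X of seeders with total upload U_X, with N_L leechers and streamrate r, is exactly (1 - 1/N_L)·min(1, N_L·r/U_X). In particular, if U_X ≤ N_L·r, the optimal efficiency is 1 - 1/N_L. -/

import Mathlib

/-- In a perfect system with N_L leechers and streamrate r, a seeder set X
with total upload U_X receiving external input rate I can usefully output at most
min(U_X, N_L·min(I,r)); its optimal efficiency sup (O - I)/U_X is exactly
(1 - 1/N_L)·min(1, N_L·r/U_X), and equals 1 - 1/N_L when U_X ≤ N_L·r. -/
theorem stmt7 (NL : ℕ) (hN : 1 ≤ NL) (r UX : ℝ) (hr : 0 < r) (hU : 0 < UX) :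
    IsGreatest {η : ℝ | ∃ I O : ℝ, 0 ≤ I ∧ 0 ≤ O ∧ O ≤ UX ∧
        O ≤ (NL:ℝ) * min I r ∧ η = (O - I)/UX}
      ((1 - 1/(NL:ℝ)) * min 1 ((NL:ℝ)*r/UX)) ∧
    (UX ≤ (NL:ℝ)*r →
      IsGreatest {η : ℝ | ∃ I O : ℝ, 0 ≤ I ∧ 0 ≤ O ∧ O ≤ UX ∧
          O ≤ (NL:ℝ) * min I r ∧ η = (O - I)/UX}
        (1 - 1/(NL:ℝ))) := by
  have hNL : (1:ℝ) ≤ (NL:ℝ) := by exact_mod_cast hN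
  have hNL0 : (0:ℝ) < (NL:ℝ) := lt_of_lt_of_le one_pos hNL
  have hmain : IsGreatest {η : ℝ | ∃ I O : ℝ, 0 ≤ I ∧ 0 ≤ O ∧ O ≤ UX ∧
        O ≤ (NL:ℝ) * min I r ∧ η = (O - I)/UX}
      ((1 - 1/(NL:ℝ)) * min 1 ((NL:ℝ)*r/UX)) := by
    constructor
    · rcases le_total UX ((NL:ℝ)*r) with h | h
      · refine ⟨UX/NL, UX, by positivity, hU.le, le_rfl, ?_, ?_⟩
        · have hmin : min (UX/NL) r = UX/NL := by
            apply min_eq_left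
            rw [div_le_iff₀ hNL0]
            nlinarith
          rw [hmin]
          field_simp
          exact le_rfl
        · have h1 : min 1 ((NL:ℝ)*r/UX) = 1 := by
            apply min_eq_left
            rw [le_div_iff₀ hU]; linarith
          rw [h1]; field_simp
      · refine ⟨r, (NL:ℝ)*r, hr.le, by positivity, h, ?_, ?_⟩
        · rw [min_self]
        · have h1 : min 1 ((NL:ℝ)*r/UX) = (NL:ℝ)*r/UX := by
            apply min_eq_right
            rw [div_le_one hU]; linarith
          rw [h1]; field_simp
    · rintro η ⟨I, O, hI, hO, hOU, hOm, rfl⟩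
      rw [div_le_iff₀ hU]
      have hmul : min 1 ((NL:ℝ)*r/UX) * UX = min UX ((NL:ℝ)*r) := by
        rcases le_total UX ((NL:ℝ)*r) with h | h
        · rw [min_eq_left (by rw [le_div_iff₀ hU]; linarith : (1:ℝ) ≤ (NL:ℝ)*r/UX),
            min_eq_left h]; ring
        · rw [min_eq_right (by rw [div_le_one hU]; linarith : (NL:ℝ)*r/UX ≤ 1),
            min_eq_right h]; field_simp
      rw [mul_assoc, hmul]
      have hONr : O ≤ (NL:ℝ)*r := le_trans hOm (by
        have : min I r ≤ r := min_le_right _ _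
        nlinarith)
      have hOmin : O ≤ min UX ((NL:ℝ)*r) := le_min hOU hONr
      have hIO : O ≤ (NL:ℝ)*I := le_trans hOm (by
        have : min I r ≤ I := min_le_left _ _
        nlinarith)
      have h11 : (0:ℝ) ≤ 1 - 1/(NL:ℝ) := by
        have : 1/(NL:ℝ) ≤ 1 := by
          rw [div_le_one hNL0]; exact hNL
        linarith
      have : O - I ≤ (1 - 1/(NL:ℝ)) * O := by
        have hI' : O/(NL:ℝ) ≤ I := by rw [div_le_iff₀ hNL0]; nlinarith
        have : (1 - 1/(NL:ℝ)) * O = O - O/(NL:ℝ) := by field_simp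
        linarith [this]
      calc O - I ≤ (1 - 1/(NL:ℝ)) * O := this
        _ ≤ (1 - 1/(NL:ℝ)) * min UX ((NL:ℝ)*r) := by
            exact mul_le_mul_of_nonneg_left hOmin h11
  refine ⟨hmain, fun h => ?_⟩
  have h1 : min 1 ((NL:ℝ)*r/UX) = 1 := by
    apply min_eq_left
    rw [le_div_iff₀ hU]; linarith
  have := hmain
  rw [h1, mul_one] at this
  exact this
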